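/- Let N ≥ 1, let A be an N×N real symmetric matrix with nonnegative entries and largest eigenvalue μ_max(A), and let λ > 0 satisfy λ·μ_max(A) ≤ 1. Suppose ρ ∈ ℝ^N with 0 ≤ ρ_i ≤ 1 for all i satisfies the equilibrium equations ρ_i = λ·φ_i·(1−ρ_i)·(Aρ)_i for all i, for some φ ∈ ℝ^N with 0 < φ_i ≤ 1. Then ρ = 0. That is, when λ ≤ 1/μ_max(A), the disease-free state ρ₀ = 0 is the unique equilibrium of the SIS system in the cube H = [0,1]^N. -/

import Mathlib

open Matrix Finset

lemma rayleigh_bound {N : ℕ} (A : Matrix (Fin N) (Fin N) ℝ) (hA : A.IsHermitian)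
    (x : Fin N → ℝ) (μ : ℝ) (hμ : ∀ i, hA.eigenvalues i ≤ μ) :
    x ⬝ᵥ (A *ᵥ x) ≤ μ * (x ⬝ᵥ x) := by
  set U : Matrix (Fin N) (Fin N) ℝ := (hA.eigenvectorUnitary : Matrix (Fin N) (Fin N) ℝ) with hU
  have hUU : U * star U = 1 := (Matrix.mem_unitaryGroup_iff).mp hA.eigenvectorUnitary.2
  have hstar : star U = Uᵀ := by
    rw [Matrix.star_eq_conjTranspose, conjTranspose_eq_transpose_of_trivial]
  set y : Fin N → ℝ := star U *ᵥ x with hy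
  have hxx : x ⬝ᵥ x = y ⬝ᵥ y := by
    rw [hy, dotProduct_mulVec, hstar, vecMul_transpose, mulVec_mulVec, ← hstar, hUU, one_mulVec]
  have hAx : x ⬝ᵥ (A *ᵥ x) = ∑ i, hA.eigenvalues i * (y i)^2 := by
    conv_lhs => rw [hA.spectral_theorem, Unitary.conjStarAlgAut_apply]
    rw [← mulVec_mulVec, ← mulVec_mulVec, dotProduct_mulVec, ← mulVec_transpose, ← hstar, ← hy]
    simp [dotProduct, mulVec_diagonal, sq, mul_comm, mul_assoc, mul_left_comm]
  rw [hAx, hxx]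
  have : (μ : ℝ) * (y ⬝ᵥ y) = ∑ i, μ * (y i)^2 := by
    simp [dotProduct, Finset.mul_sum, sq]
  rw [this]
  exact Finset.sum_le_sum fun i _ => mul_le_mul_of_nonneg_right (hμ i) (sq_nonneg _)

/-- Uniqueness of the disease-free equilibrium (Theorem 2): if `λ μ_max(A) ≤ 1`, then the
only equilibrium of the SIS system in the cube `[0,1]^N` is `ρ = 0`. -/
theorem diseaseFree_unique_equilibrium
    (N : ℕ) (hN : 1 ≤ N) (A : Matrix (Fin N) (Fin N) ℝ)
    (hA : A.IsHermitian) (hApos : ∀ i j, 0 ≤ A i j)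
    (lam : ℝ) (hlam : 0 < lam)
    (hthr : lam * Finset.univ.sup' (Finset.univ_nonempty_iff.mpr ⟨⟨0, hN⟩⟩) hA.eigenvalues ≤ 1)
    (ρ φ : Fin N → ℝ) (hρ : ∀ i, 0 ≤ ρ i ∧ ρ i ≤ 1) (hφ : ∀ i, 0 < φ i ∧ φ i ≤ 1)
    (heq : ∀ i, ρ i = lam * φ i * (1 - ρ i) * A.mulVec ρ i) :
    ρ = 0 := by
  by_contra hne
  -- some coordinate is positive
  obtain ⟨k, hk⟩ : ∃ k, 0 < ρ k := by
    by_contra h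
    push_neg at h
    exact hne (funext fun i => le_antisymm (h i) (hρ i).1)
  have hAρ : ∀ i, 0 ≤ A.mulVec ρ i := by
    intro i
    simp only [Matrix.mulVec, dotProduct]
    exact Finset.sum_nonneg fun j _ => mul_nonneg (hApos i j) (hρ j).1
  -- weak coordinatewise bound : ρ i ≤ lam * (Aρ) i
  have hweak : ∀ i, ρ i ≤ lam * A.mulVec ρ i := by
    intro i
    rw [heq i]
    have h1 : φ i * (1 - ρ i) ≤ 1 :=
      mul_le_one₀ (hφ i).2 (by linarith [(hρ i).2]) (by linarith [(hρ i).1])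
    calc lam * φ i * (1 - ρ i) * A.mulVec ρ i
        = (φ i * (1 - ρ i)) * (lam * A.mulVec ρ i) := by ring
      _ ≤ 1 * (lam * A.mulVec ρ i) :=
          mul_le_mul_of_nonneg_right h1 (mul_nonneg hlam.le (hAρ i))
      _ = lam * A.mulVec ρ i := one_mul _
  -- strict bound at k
  have hkeq := heq k
  have hfac : 0 < (1 - ρ k) * A.mulVec ρ k := by
    have h0 : 0 < lam * φ k := mul_pos hlam (hφ k).1
    nlinarith [hk, hkeq]
  have h1k : 0 < 1 - ρ k := by
    rcases lt_or_ge 0 (1 - ρ k) with h | h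
    · exact h
    · exfalso; nlinarith [hAρ k]
  have hAk : 0 < A.mulVec ρ k := by nlinarith
  have hstrict : ρ k < lam * A.mulVec ρ k := by
    rw [hkeq]
    have h1 : φ k * (1 - ρ k) < 1 := by
      calc φ k * (1 - ρ k) ≤ 1 * (1 - ρ k) :=
            mul_le_mul_of_nonneg_right (hφ k).2 h1k.le
        _ = 1 - ρ k := one_mul _
        _ < 1 := by linarith
    calc lam * φ k * (1 - ρ k) * A.mulVec ρ k
        = (φ k * (1 - ρ k)) * (lam * A.mulVec ρ k) := by ring
      _ < 1 * (lam * A.mulVec ρ k) :=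
          mul_lt_mul_of_pos_right h1 (mul_pos hlam hAk)
      _ = lam * A.mulVec ρ k := one_mul _
  -- sum up : ρ⬝ρ < lam * (ρ ⬝ Aρ)
  have hsum : ρ ⬝ᵥ ρ < lam * (ρ ⬝ᵥ A.mulVec ρ) := by
    have : ∑ i, ρ i * ρ i < ∑ i, ρ i * (lam * A.mulVec ρ i) := by
      apply Finset.sum_lt_sum
      · intro i _
        exact mul_le_mul_of_nonneg_left (hweak i) (hρ i).1
      · exact ⟨k, Finset.mem_univ k, mul_lt_mul_of_pos_left hstrict hk⟩
    calc ρ ⬝ᵥ ρ = ∑ i, ρ i * ρ i := rfl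
      _ < ∑ i, ρ i * (lam * A.mulVec ρ i) := this
      _ = lam * ∑ i, ρ i * A.mulVec ρ i := by rw [Finset.mul_sum]; congr 1; ext i; ring
      _ = lam * (ρ ⬝ᵥ A.mulVec ρ) := rfl
  -- Rayleigh bound gives the reverse inequality
  set μ : ℝ := Finset.univ.sup' (Finset.univ_nonempty_iff.mpr ⟨⟨0, hN⟩⟩) hA.eigenvalues with hμdef
  have hray : ρ ⬝ᵥ A.mulVec ρ ≤ μ * (ρ ⬝ᵥ ρ) :=
    rayleigh_bound A hA ρ μ fun i => Finset.le_sup' _ (Finset.mem_univ i)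
  have hρρ : 0 ≤ ρ ⬝ᵥ ρ := Finset.sum_nonneg fun i _ => mul_self_nonneg _
  have : lam * (ρ ⬝ᵥ A.mulVec ρ) ≤ ρ ⬝ᵥ ρ := by
    calc lam * (ρ ⬝ᵥ A.mulVec ρ) ≤ lam * (μ * (ρ ⬝ᵥ ρ)) :=
          mul_le_mul_of_nonneg_left hray hlam.le
      _ = (lam * μ) * (ρ ⬝ᵥ ρ) := by ring
      _ ≤ 1 * (ρ ⬝ᵥ ρ) := mul_le_mul_of_nonneg_right hthr hρρ
      _ = ρ ⬝ᵥ ρ := one_mul _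
  linarith
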